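/- Let {P_x(θ)} be a finite family of differentiable probability distributions (P_x(θ) ≥ 0, Σ_x P_x(θ) = 1) arising from a quantum measurement: P_x(θ) = Tr(ρ_θ E_x) where ρ_θ is a density matrix, {E_x} are positive semidefinite with Σ_x E_x = I, and L is a Hermitian matrix with ∂_θ ρ_θ = (L ρ_θ + ρ_θ L)/2. Then the classical Fisher information F = Σ_{x: P_x(θ)≠0} (∂_θ P_x(θ))² / P_x(θ) satisfies F ≤ Tr(ρ_θ L²). -/

import Mathlib

open Matrix ComplexOrder

private lemma trace_re_eq {n : Type} [Fintype n] (X Y : Matrix n n ℂ) :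
    ((Xᴴ * Y).trace).re =
      ∑ p : (n × n) ⊕ (n × n),
        (Sum.elim (fun q : n × n => (X q.1 q.2).re) (fun q : n × n => (X q.1 q.2).im) p) *
        (Sum.elim (fun q : n × n => (Y q.1 q.2).re) (fun q : n × n => (Y q.1 q.2).im) p) := by
  simp only [Fintype.sum_sum_type, Sum.elim_inl, Sum.elim_inr, Matrix.trace, Matrix.diag_apply,
    Matrix.mul_apply, Matrix.conjTranspose_apply, Complex.re_sum, Fintype.sum_prod_type]
  rw [Finset.sum_comm, ← Finset.sum_add_distrib]
  refine Finset.sum_congr rfl fun i _ => ?_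
  rw [← Finset.sum_add_distrib]
  refine Finset.sum_congr rfl fun j _ => ?_
  simp only [Complex.star_def, Complex.mul_re, Complex.conj_re, Complex.conj_im]
  ring

private lemma cs_trace {n : Type} [Fintype n] (X Y : Matrix n n ℂ) :
    ((Xᴴ * Y).trace).re ^ 2 ≤ ((Xᴴ * X).trace).re * ((Yᴴ * Y).trace).re := by
  rw [trace_re_eq X Y, trace_re_eq X X, trace_re_eq Y Y]
  have := Finset.sum_mul_sq_le_sq_mul_sq (Finset.univ : Finset ((n × n) ⊕ (n × n)))
    (Sum.elim (fun q : n × n => (X q.1 q.2).re) (fun q : n × n => (X q.1 q.2).im))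
    (Sum.elim (fun q : n × n => (Y q.1 q.2).re) (fun q : n × n => (Y q.1 q.2).im))
  simpa [sq] using this

private lemma trace_re_nonneg {n : Type} [Fintype n] (X : Matrix n n ℂ) :
    0 ≤ ((Xᴴ * X).trace).re := by
  rw [trace_re_eq X X]
  exact Finset.sum_nonneg fun p _ => mul_self_nonneg _

theorem classical_FI_le_QFI {n : Type} [Fintype n] [DecidableEq n]
    {ι : Type} [Fintype ι]
    (ρ : ℝ → Matrix n n ℂ) (θ : ℝ) (dρ : Matrix n n ℂ)
    (hderiv : ∀ i j, HasDerivAt (fun t => ρ t i j) (dρ i j) θ)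
    (hpsd : (ρ θ).PosSemidef) (htr : (ρ θ).trace = 1)
    (E : ι → Matrix n n ℂ) (hE : ∀ x, (E x).PosSemidef) (hsum : ∑ x, E x = 1)
    (L : Matrix n n ℂ) (hL : L.IsHermitian)
    (hSLD : dρ = (1 / 2 : ℂ) • (L * ρ θ + ρ θ * L)) :
    ∑ x ∈ Finset.univ.filter (fun x => ((ρ θ * E x).trace).re ≠ 0),
        ((dρ * E x).trace).re ^ 2 / ((ρ θ * E x).trace).re
      ≤ ((ρ θ * (L * L)).trace).re := by
  set R := ρ θ with hR
  have hRherm : Rᴴ = R := hpsd.isHermitian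
  open scoped MatrixOrder in
  set S := CFC.sqrt R with hSdef
  open scoped MatrixOrder in
  have hSherm : Sᴴ = S := (CFC.sqrt_nonneg R).posSemidef.isHermitian
  open scoped MatrixOrder in
  have hSS : S * S = R := CFC.sqrt_mul_sqrt_self R hpsd.nonneg
  open scoped MatrixOrder in
  set T : ι → Matrix n n ℂ := fun x => CFC.sqrt (E x) with hTdef
  open scoped MatrixOrder in
  have hTherm : ∀ x, (T x)ᴴ = T x := fun x => (CFC.sqrt_nonneg (E x)).posSemidef.isHermitian
  open scoped MatrixOrder in
  have hTT : ∀ x, T x * T x = E x := fun x => CFC.sqrt_mul_sqrt_self (E x) (hE x).nonneg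
  set X : ι → Matrix n n ℂ := fun x => T x * S with hXdef
  set Y : ι → Matrix n n ℂ := fun x => T x * (L * S) with hYdef
  -- trace identities
  have hXX : ∀ x, ((X x)ᴴ * X x).trace = (R * E x).trace := by
    intro x
    have h : (X x)ᴴ * X x = S * (E x * S) := by
      simp only [hXdef, Matrix.conjTranspose_mul, hSherm, hTherm]
      rw [← hTT x]; noncomm_ring
    rw [h, Matrix.trace_mul_comm, Matrix.mul_assoc, hSS, Matrix.trace_mul_comm]
  have hYY : ∀ x, ((Y x)ᴴ * Y x).trace = (R * (L * E x * L)).trace := by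
    intro x
    have h : (Y x)ᴴ * Y x = S * (L * E x * L * S) := by
      simp only [hYdef, Matrix.conjTranspose_mul, hSherm, hTherm, hL.eq]
      rw [← hTT x]; noncomm_ring
    rw [h, Matrix.trace_mul_comm, Matrix.mul_assoc, hSS, Matrix.trace_mul_comm]
  have hXY : ∀ x, ((X x)ᴴ * Y x).trace = (R * (E x * L)).trace := by
    intro x
    have h : (X x)ᴴ * Y x = S * (E x * L * S) := by
      simp only [hXdef, hYdef, Matrix.conjTranspose_mul, hSherm, hTherm]
      rw [← hTT x]; noncomm_ring
    rw [h, Matrix.trace_mul_comm, Matrix.mul_assoc, hSS, Matrix.trace_mul_comm]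
  -- derivative identity: Re Tr(dρ E) = Re Tr(R (E L))
  have hdP : ∀ x, ((dρ * E x).trace).re = ((R * (E x * L)).trace).re := by
    intro x
    have hcyc : (L * R * E x).trace = (R * (E x * L)).trace := by
      rw [Matrix.trace_mul_comm (L * R) (E x), ← Matrix.mul_assoc,
        Matrix.trace_mul_comm (E x * L) R]
    have h1 : (R * (E x * L))ᴴ = L * E x * R := by
      simp only [Matrix.conjTranspose_mul, hRherm, hL.eq, (hE x).isHermitian.eq]
    have hconj : (R * (L * E x)).trace = star ((R * (E x * L)).trace) := by
      rw [← Matrix.trace_conjTranspose, h1, Matrix.trace_mul_comm]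
    rw [hSLD, Matrix.smul_mul, Matrix.trace_smul, Matrix.add_mul, Matrix.trace_add,
      Matrix.mul_assoc R L (E x), hcyc, hconj, smul_eq_mul]
    set z := (R * (E x * L)).trace with hz
    have hzz : z + star z = ((2 * z.re : ℝ) : ℂ) := by
      rw [Complex.star_def, Complex.add_conj]
    rw [hzz]
    have h2 : (1 / 2 : ℂ) * ((2 * z.re : ℝ) : ℂ) = ((z.re : ℝ) : ℂ) := by push_cast; ring
    rw [h2, Complex.ofReal_re]
  -- per-x inequality
  have key : ∀ x ∈ Finset.univ.filter (fun x => ((R * E x).trace).re ≠ 0),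
      ((dρ * E x).trace).re ^ 2 / ((R * E x).trace).re
        ≤ ((R * (L * E x * L)).trace).re := by
    intro x hx
    rw [Finset.mem_filter] at hx
    have hp0 : 0 ≤ ((R * E x).trace).re := by rw [← hXX x]; exact trace_re_nonneg _
    have hp : 0 < ((R * E x).trace).re := lt_of_le_of_ne hp0 (Ne.symm hx.2)
    rw [div_le_iff₀ hp, hdP x, ← hXY x, ← hXX x, ← hYY x]
    calc (((X x)ᴴ * Y x).trace).re ^ 2
        ≤ (((X x)ᴴ * X x).trace).re * (((Y x)ᴴ * Y x).trace).re := cs_trace _ _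
      _ = (((Y x)ᴴ * Y x).trace).re * (((X x)ᴴ * X x).trace).re := mul_comm _ _
  refine (Finset.sum_le_sum key).trans ?_
  have step2 : ∑ x ∈ Finset.univ.filter (fun x => ((R * E x).trace).re ≠ 0),
      ((R * (L * E x * L)).trace).re ≤ ∑ x, ((R * (L * E x * L)).trace).re := by
    apply Finset.sum_le_sum_of_subset_of_nonneg (Finset.filter_subset _ _)
    intro x _ _
    rw [← hYY x]; exact trace_re_nonneg _
  refine step2.trans ?_
  have hmat : ∑ x, L * E x * L = L * L := by
    have h' : L * (∑ x, E x) * L = ∑ x, L * E x * L := by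
      rw [Finset.mul_sum, Finset.sum_mul]
    rw [← h', hsum, mul_one]
  have hfin : ∑ x, ((R * (L * E x * L)).trace).re = ((R * (L * L)).trace).re := by
    rw [← Complex.re_sum, ← Matrix.trace_sum, ← Finset.mul_sum, hmat]
  rw [hfin]
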